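/- Let g be a symmetric 4×4 real matrix whose associated quadratic form x ↦ xᵀgx is equivalent over ℝ to the Minkowski form −x₀² + x₁² + x₂² + x₃² (i.e. g has Lorentzian signature (−1,1,1,1)). Let ζ ∈ ℝ⁴ and W ∈ ℝ⁴ with Ω² = 1 + ζᵀW > 0. Then the quadratic form associated to T(ζ, W, g) is also equivalent over ℝ to the Minkowski form −x₀² + x₁² + x₂² + x₃². -/

import Mathlib

open Matrix

/-- The transformation `T(ζ, W, g) = Ω²·g − (gζ)Wᵀ − W(gζ)ᵀ − (λ/Ω²)·W Wᵀ`
with `Ω² = 1 + ζᵀW` and `λ = −ζᵀgζ`. -/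
noncomputable def ehlersT {n : ℕ} (ζ W : Fin n → ℝ) (g : Matrix (Fin n) (Fin n) ℝ) :
    Matrix (Fin n) (Fin n) ℝ :=
  (1 + ζ ⬝ᵥ W) • g - vecMulVec (g *ᵥ ζ) W - vecMulVec W (g *ᵥ ζ)
    - ((-(ζ ⬝ᵥ g *ᵥ ζ)) / (1 + ζ ⬝ᵥ W)) • vecMulVec W W

/-- The Minkowski matrix `diag(−1, 1, 1, 1)`. -/
def minkowskiMatrix : Matrix (Fin 4) (Fin 4) ℝ := Matrix.diagonal ![-1, 1, 1, 1]

/-- A symmetric `4 × 4` real matrix has Lorentzian signature `(−1,1,1,1)` if its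
quadratic form is carried to the Minkowski form `−x₀² + x₁² + x₂² + x₃²` by an
invertible real linear change of variables, i.e. if `g` is congruent to
`diag(−1,1,1,1)` via an invertible matrix (Sylvester's law of inertia). -/
def IsLorentzian (g : Matrix (Fin 4) (Fin 4) ℝ) : Prop :=
  ∃ P : Matrix (Fin 4) (Fin 4) ℝ, IsUnit P.det ∧ Pᵀ * g * P = minkowskiMatrix

section aux

variable {n : ℕ}

lemma aux_vecMulVec_transpose (a b : Fin n → ℝ) :
    (vecMulVec a b)ᵀ = vecMulVec b a := by
  ext i j; simp [vecMulVec_apply, mul_comm]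

lemma aux_mul_vecMulVec (M : Matrix (Fin n) (Fin n) ℝ) (a b : Fin n → ℝ) :
    M * vecMulVec a b = vecMulVec (M *ᵥ a) b := by
  ext i j
  simp [vecMulVec_apply, Matrix.mul_apply, mulVec, dotProduct, Finset.sum_mul, mul_assoc]

lemma aux_vecMulVec_mul (M : Matrix (Fin n) (Fin n) ℝ) (a b : Fin n → ℝ) :
    vecMulVec a b * M = vecMulVec a (Mᵀ *ᵥ b) := by
  ext i j
  simp [vecMulVec_apply, Matrix.mul_apply, mulVec, dotProduct, Finset.mul_sum]
  ring_nf
  apply Finset.sum_congr rfl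
  intro k _; ring

lemma aux_vecMulVec_mul_vecMulVec (a b c d : Fin n → ℝ) :
    vecMulVec a b * vecMulVec c d = (b ⬝ᵥ c) • vecMulVec a d := by
  ext i j
  simp [vecMulVec_apply, Matrix.mul_apply, dotProduct, Finset.sum_mul, Finset.mul_sum]
  apply Finset.sum_congr rfl
  intro k _; ring

lemma aux_vecMulVec_mulVec (a b c : Fin n → ℝ) :
    vecMulVec a b *ᵥ c = (b ⬝ᵥ c) • a := by
  ext i
  simp only [mulVec, dotProduct, vecMulVec_apply, Pi.smul_apply, smul_eq_mul, Finset.sum_mul]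
  apply Finset.sum_congr rfl
  intro k _; ring

lemma aux_vecMulVec_smul_left (x : ℝ) (a b : Fin n → ℝ) :
    vecMulVec (x • a) b = x • vecMulVec a b := by
  ext i j
  simp [vecMulVec_apply, mul_assoc]

end aux

/-- **The transformation `T` preserves Lorentzian signature:** if `g` is symmetric of
Lorentzian signature `(−1,1,1,1)` and `Ω² = 1 + ζᵀW > 0`, then `T(ζ, W, g)` also has
Lorentzian signature `(−1,1,1,1)`. -/
theorem ehlersT_isLorentzian (g : Matrix (Fin 4) (Fin 4) ℝ) (hg : g.IsSymm)
    (hLor : IsLorentzian g) (ζ W : Fin 4 → ℝ) (hΩ : 0 < 1 + ζ ⬝ᵥ W) :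
    IsLorentzian (ehlersT ζ W g) := by
  obtain ⟨P, hPdet, hP⟩ := hLor
  set Ω2 : ℝ := 1 + ζ ⬝ᵥ W with hΩ2
  have hΩ2ne : Ω2 ≠ 0 := ne_of_gt hΩ
  set C0 : Matrix (Fin 4) (Fin 4) ℝ := 1 - Ω2⁻¹ • vecMulVec ζ W with hC0
  set D0 : Matrix (Fin 4) (Fin 4) ℝ := 1 + vecMulVec ζ W with hD0
  -- C0 * D0 = 1
  have hCD : C0 * D0 = 1 := by
    rw [hC0, hD0]
    rw [Matrix.mul_add, Matrix.sub_mul, Matrix.sub_mul, Matrix.one_mul, Matrix.one_mul,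
      Matrix.smul_mul, Matrix.smul_mul, Matrix.mul_one, aux_vecMulVec_mul_vecMulVec]
    have hd : (W ⬝ᵥ ζ : ℝ) = ζ ⬝ᵥ W := dotProduct_comm _ _
    rw [hd, smul_smul]
    have hcoef : Ω2⁻¹ + Ω2⁻¹ * (ζ ⬝ᵥ W) = 1 := by
      field_simp [hΩ2]
      exact hΩ2.symm
    ext i j
    simp only [Matrix.add_apply, Matrix.sub_apply, Matrix.smul_apply, Matrix.one_apply,
      smul_eq_mul]
    have h2 := congrArg (· * (vecMulVec ζ W i j)) hcoef
    simp only [add_mul, one_mul] at h2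
    ring_nf
    ring_nf at h2
    linarith
  have hDC : D0 * C0 = 1 := mul_eq_one_comm.mp hCD
  have ht : C0ᵀ = 1 - Ω2⁻¹ • vecMulVec W ζ := by
    rw [hC0, Matrix.transpose_sub, Matrix.transpose_one, Matrix.transpose_smul,
      aux_vecMulVec_transpose]
  -- Expansion of the congruence
  have expand : C0ᵀ * g * C0 = g - Ω2⁻¹ • vecMulVec (g *ᵥ ζ) W - Ω2⁻¹ • vecMulVec W (g *ᵥ ζ)
      + (Ω2⁻¹ * Ω2⁻¹ * (ζ ⬝ᵥ g *ᵥ ζ)) • vecMulVec W W := by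
    rw [ht, hC0]
    simp only [Matrix.sub_mul, Matrix.mul_sub, Matrix.one_mul, Matrix.mul_one,
      Matrix.smul_mul, Matrix.mul_smul, aux_mul_vecMulVec, aux_vecMulVec_mul,
      aux_vecMulVec_mul_vecMulVec, smul_smul, hg.eq, aux_vecMulVec_mulVec,
      aux_vecMulVec_smul_left]
    rw [show ((g *ᵥ ζ) ⬝ᵥ ζ : ℝ) = ζ ⬝ᵥ g *ᵥ ζ from dotProduct_comm _ _]
    module
  have hfact : ehlersT ζ W g = Ω2 • (C0ᵀ * g * C0) := by
    rw [expand, ehlersT, ← hΩ2]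
    match_scalars <;> field_simp <;> ring
  -- the change of variables
  set s : ℝ := Real.sqrt Ω2 with hs
  have hs2 : s * s = Ω2 := Real.mul_self_sqrt hΩ.le
  have hsne : s ≠ 0 := by
    intro h
    rw [h, mul_zero] at hs2
    exact hΩ2ne hs2.symm
  refine ⟨(s⁻¹ • D0) * P, ?_, ?_⟩
  · have hDdet : IsUnit D0.det := by
      apply IsUnit.of_mul_eq_one C0.det
      rw [← Matrix.det_mul, hDC, Matrix.det_one]
    rw [Matrix.det_mul, Matrix.det_smul]
    exact ((IsUnit.pow _ (isUnit_iff_ne_zero.mpr (inv_ne_zero hsne))).mul hDdet).mul hPdet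
  · have hDt : D0ᵀ * C0ᵀ = 1 := by
      rw [← Matrix.transpose_mul, hCD, Matrix.transpose_one]
    have hkey : D0ᵀ * (C0ᵀ * g * C0) * D0 = g := by
      have : D0ᵀ * (C0ᵀ * g * C0) * D0 = (D0ᵀ * C0ᵀ) * g * (C0 * D0) := by
        noncomm_ring
      rw [this, hDt, hCD, Matrix.one_mul, Matrix.mul_one]
    rw [hfact, Matrix.transpose_mul, Matrix.transpose_smul]
    have hassoc : Pᵀ * (s⁻¹ • D0ᵀ) * (Ω2 • (C0ᵀ * g * C0)) * (s⁻¹ • D0 * P)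
        = (s⁻¹ * (Ω2 * s⁻¹)) • (Pᵀ * (D0ᵀ * (C0ᵀ * g * C0) * D0) * P) := by
      simp only [Matrix.smul_mul, Matrix.mul_smul, smul_smul]
      congr 1
      noncomm_ring
    rw [hassoc, hkey]
    have hone : s⁻¹ * (Ω2 * s⁻¹) = 1 := by
      rw [← hs2]; field_simp
    rw [hone, one_smul, hP]
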